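/- For every non-negative integer n, ∑_{k=0}^{n} C(n,k)² · H_k · H_{n−k} = C(2n,n) · ((H_{2n} − 2H_n)² + H_n^{(2)} − H_{2n}^{(2)}), where C(a,b) denotes the ordinary binomial coefficient. -/

import Mathlib

open Finset

/-- The `n`-th harmonic number `H_n = ∑_{j=1}^n 1/j`, with `H_0 = 0`. -/
noncomputable def H (n : ℕ) : ℝ :=
  ∑ j ∈ Finset.range n, 1 / ((j : ℝ) + 1)

/-- The `n`-th generalized harmonic number of order 2, `H_n^{(2)} = ∑_{j=1}^n 1/j²`. -/
noncomputable def H2 (n : ℕ) : ℝ :=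
  ∑ j ∈ Finset.range n, 1 / ((j : ℝ) + 1) ^ 2

lemma H_succ (n : ℕ) : H (n+1) = H n + 1/((n:ℝ)+1) := by
  rw [H, H, Finset.sum_range_succ]

lemma H2_succ (n : ℕ) : H2 (n+1) = H2 n + 1/((n:ℝ)+1)^2 := by
  rw [H2, H2, Finset.sum_range_succ]

noncomputable def dR (n k : ℕ) : ℝ := ∏ i ∈ Finset.range k, ((n:ℝ) - i)

lemma dR_succ (n k : ℕ) : dR n (k+1) = dR n k * ((n:ℝ) - k) := Finset.prod_range_succ _ _

lemma dR_factorial {n k : ℕ} (h : k ≤ n) : dR n k * (((n-k).factorial : ℕ) : ℝ) = ((n.factorial : ℕ) : ℝ) := by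
  have h1 : dR n k = (n.descFactorial k : ℝ) := by
    rw [Nat.descFactorial_eq_prod_range, Nat.cast_prod]
    exact Finset.prod_congr rfl fun i hi => by
      rw [Finset.mem_range] at hi
      rw [Nat.cast_sub (by omega)]
  rw [h1, ← Nat.cast_mul, mul_comm, Nat.factorial_mul_descFactorial h]

@[ext] structure Q where
  a : ℝ
  b : ℝ
  c : ℝ
  d : ℝ

namespace Q

instance : Zero Q := ⟨⟨0,0,0,0⟩⟩
instance : One Q := ⟨⟨1,0,0,0⟩⟩
instance : Add Q := ⟨fun x y => ⟨x.a+y.a, x.b+y.b, x.c+y.c, x.d+y.d⟩⟩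
instance : Neg Q := ⟨fun x => ⟨-x.a, -x.b, -x.c, -x.d⟩⟩
instance : Mul Q := ⟨fun x y => ⟨x.a*y.a, x.a*y.b+x.b*y.a, x.a*y.c+x.c*y.a,
  x.a*y.d+x.b*y.c+x.c*y.b+x.d*y.a⟩⟩

@[simp] lemma add_a (x y : Q) : (x+y).a = x.a+y.a := rfl
@[simp] lemma add_b (x y : Q) : (x+y).b = x.b+y.b := rfl
@[simp] lemma add_c (x y : Q) : (x+y).c = x.c+y.c := rfl
@[simp] lemma add_d (x y : Q) : (x+y).d = x.d+y.d := rfl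
@[simp] lemma neg_a (x : Q) : (-x).a = -x.a := rfl
@[simp] lemma neg_b (x : Q) : (-x).b = -x.b := rfl
@[simp] lemma neg_c (x : Q) : (-x).c = -x.c := rfl
@[simp] lemma neg_d (x : Q) : (-x).d = -x.d := rfl
@[simp] lemma mul_a (x y : Q) : (x*y).a = x.a*y.a := rfl
@[simp] lemma mul_b (x y : Q) : (x*y).b = x.a*y.b+x.b*y.a := rfl
@[simp] lemma mul_c (x y : Q) : (x*y).c = x.a*y.c+x.c*y.a := rfl
@[simp] lemma mul_d (x y : Q) : (x*y).d = x.a*y.d+x.b*y.c+x.c*y.b+x.d*y.a := rfl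
@[simp] lemma zero_a : (0:Q).a = 0 := rfl
@[simp] lemma zero_b : (0:Q).b = 0 := rfl
@[simp] lemma zero_c : (0:Q).c = 0 := rfl
@[simp] lemma zero_d : (0:Q).d = 0 := rfl
@[simp] lemma one_a : (1:Q).a = 1 := rfl
@[simp] lemma one_b : (1:Q).b = 0 := rfl
@[simp] lemma one_c : (1:Q).c = 0 := rfl
@[simp] lemma one_d : (1:Q).d = 0 := rfl

instance : CommRing Q where
  add_assoc x y z := by ext <;> simp <;> ring
  zero_add x := by ext <;> simp
  add_zero x := by ext <;> simp
  add_comm x y := by ext <;> simp <;> ring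
  mul_assoc x y z := by ext <;> simp <;> ring
  one_mul x := by ext <;> simp
  mul_one x := by ext <;> simp
  left_distrib x y z := by ext <;> simp <;> ring
  right_distrib x y z := by ext <;> simp <;> ring
  zero_mul x := by ext <;> simp
  mul_zero x := by ext <;> simp
  mul_comm x y := by ext <;> simp <;> ring
  neg_add_cancel x := by ext <;> simp
  nsmul := nsmulRec
  zsmul := zsmulRec

@[simp] lemma natCast_a (k : ℕ) : (k : Q).a = k := by
  induction k with
  | zero => simp [Nat.cast_zero]
  | succ m ih => rw [Nat.cast_succ]; simp [ih]

@[simp] lemma natCast_b (k : ℕ) : (k : Q).b = 0 := by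
  induction k with
  | zero => simp [Nat.cast_zero]
  | succ m ih => rw [Nat.cast_succ]; simp [ih]

@[simp] lemma natCast_c (k : ℕ) : (k : Q).c = 0 := by
  induction k with
  | zero => simp [Nat.cast_zero]
  | succ m ih => rw [Nat.cast_succ]; simp [ih]

@[simp] lemma natCast_d (k : ℕ) : (k : Q).d = 0 := by
  induction k with
  | zero => simp [Nat.cast_zero]
  | succ m ih => rw [Nat.cast_succ]; simp [ih]

end Q

namespace Q

@[simp] lemma sub_a (x y : Q) : (x-y).a = x.a - y.a := by
  rw [sub_eq_add_neg, sub_eq_add_neg]; simp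
@[simp] lemma sub_b (x y : Q) : (x-y).b = x.b - y.b := by
  rw [sub_eq_add_neg, sub_eq_add_neg]; simp
@[simp] lemma sub_c (x y : Q) : (x-y).c = x.c - y.c := by
  rw [sub_eq_add_neg, sub_eq_add_neg]; simp
@[simp] lemma sub_d (x y : Q) : (x-y).d = x.d - y.d := by
  rw [sub_eq_add_neg, sub_eq_add_neg]; simp

end Q

-- key evaluation lemma along the x-direction
lemma evalX (n : ℕ) : ∀ k, k ≤ n →
    ∏ i ∈ Finset.range k, ((⟨(n:ℝ),1,0,0⟩ : Q) - (i:Q)) =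
      (⟨dR n k, dR n k * (H n - H (n-k)), 0, 0⟩ : Q) := by
  intro k
  induction k with
  | zero => intro _; simp [dR]; ext <;> simp
  | succ m ih =>
    intro hm
    have hm' : m ≤ n := by omega
    rw [Finset.prod_range_succ, ih hm', dR_succ]
    have hsub : ((⟨(n:ℝ),1,0,0⟩ : Q) - (m:Q)) = (⟨(n:ℝ)-m,1,0,0⟩ : Q) := by
      ext <;> simp
    rw [hsub]
    have hcast : ((n:ℝ) - m) = ((n - m : ℕ) : ℝ) := by
      rw [Nat.cast_sub hm']
    have h1 : n - m = (n - (m+1)) + 1 := by omega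
    have h2 : ((n - (m+1) : ℕ) : ℝ) + 1 = (n:ℝ) - m := by
      push_cast [Nat.cast_sub (by omega : m + 1 ≤ n)]
      ring
    have hH : H (n - m) = H (n - (m+1)) + 1/((n:ℝ)-m) := by
      rw [h1, H_succ, h2]
    have hne : ((n:ℝ) - m) ≠ 0 := by
      rw [hcast]
      exact_mod_cast (by omega : n - m ≠ 0)
    ext <;> simp
    rw [hH]
    field_simp
    ring

lemma evalY (n : ℕ) : ∀ k, k ≤ n →
    ∏ i ∈ Finset.range k, ((⟨(n:ℝ),0,1,0⟩ : Q) - (i:Q)) =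
      (⟨dR n k, 0, dR n k * (H n - H (n-k)), 0⟩ : Q) := by
  intro k
  induction k with
  | zero => intro _; simp [dR]; ext <;> simp
  | succ m ih =>
    intro hm
    have hm' : m ≤ n := by omega
    rw [Finset.prod_range_succ, ih hm', dR_succ]
    have hsub : ((⟨(n:ℝ),0,1,0⟩ : Q) - (m:Q)) = (⟨(n:ℝ)-m,0,1,0⟩ : Q) := by
      ext <;> simp
    rw [hsub]
    have hcast : ((n:ℝ) - m) = ((n - m : ℕ) : ℝ) := by
      rw [Nat.cast_sub hm']
    have h1 : n - m = (n - (m+1)) + 1 := by omega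
    have h2 : ((n - (m+1) : ℕ) : ℝ) + 1 = (n:ℝ) - m := by
      push_cast [Nat.cast_sub (by omega : m + 1 ≤ n)]
      ring
    have hH : H (n - m) = H (n - (m+1)) + 1/((n:ℝ)-m) := by
      rw [h1, H_succ, h2]
    have hne : ((n:ℝ) - m) ≠ 0 := by
      rw [hcast]
      exact_mod_cast (by omega : n - m ≠ 0)
    ext <;> simp
    rw [hH]
    field_simp
    ring

lemma evalZ (n : ℕ) : ∀ k, k ≤ n →
    ∏ i ∈ Finset.range k, ((⟨(n:ℝ),1,1,0⟩ : Q) - (i:Q)) =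
      (⟨dR n k, dR n k * (H n - H (n-k)), dR n k * (H n - H (n-k)),
        dR n k * ((H n - H (n-k))^2 - (H2 n - H2 (n-k)))⟩ : Q) := by
  intro k
  induction k with
  | zero => intro _; simp [dR]; ext <;> simp
  | succ m ih =>
    intro hm
    have hm' : m ≤ n := by omega
    rw [Finset.prod_range_succ, ih hm', dR_succ]
    have hsub : ((⟨(n:ℝ),1,1,0⟩ : Q) - (m:Q)) = (⟨(n:ℝ)-m,1,1,0⟩ : Q) := by
      ext <;> simp
    rw [hsub]
    have hcast : ((n:ℝ) - m) = ((n - m : ℕ) : ℝ) := by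
      rw [Nat.cast_sub hm']
    have h1 : n - m = (n - (m+1)) + 1 := by omega
    have h2 : ((n - (m+1) : ℕ) : ℝ) + 1 = (n:ℝ) - m := by
      push_cast [Nat.cast_sub (by omega : m + 1 ≤ n)]
      ring
    have hH : H (n - m) = H (n - (m+1)) + 1/((n:ℝ)-m) := by
      rw [h1, H_succ, h2]
    have hH2 : H2 (n - m) = H2 (n - (m+1)) + 1/((n:ℝ)-m)^2 := by
      rw [h1, H2_succ, h2]
    have hne : ((n:ℝ) - m) ≠ 0 := by
      rw [hcast]
      exact_mod_cast (by omega : n - m ≠ 0)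
    ext <;> simp
    · rw [hH]
      field_simp
      ring
    · rw [hH]
      field_simp
      ring
    · rw [hH, hH2]
      field_simp
      ring

lemma vdm {R : Type*} [CommRing R] (x y : R) (n : ℕ) :
    ∏ i ∈ range n, (x + y - i) =
      ∑ k ∈ range (n+1), (n.choose k : R) *
        (∏ i ∈ range k, (x - i)) * (∏ i ∈ range (n-k), (y - i)) := by
  induction n with
  | zero => simp
  | succ n ih =>
    rw [prod_range_succ, ih, Finset.sum_mul]
    -- rewrite each term
    have hterm : ∀ k ∈ range (n+1),
        (n.choose k : R) * (∏ i ∈ range k, (x - i)) * (∏ i ∈ range (n-k), (y - i))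
          * (x + y - n)
        = (n.choose k : R) * (∏ i ∈ range (k+1), (x - i)) * (∏ i ∈ range (n-k), (y - i))
          + (n.choose k : R) * (∏ i ∈ range k, (x - i)) * (∏ i ∈ range (n+1-k), (y - i)) := by
      intro k hk
      rw [mem_range] at hk
      have hk' : k ≤ n := Nat.lt_succ_iff.mp hk
      have h1 : (n+1-k) = (n-k)+1 := by omega
      rw [prod_range_succ, h1, prod_range_succ]
      have h2 : ((n - k : ℕ) : R) = (n : R) - (k : R) := by
        push_cast [Nat.cast_sub hk']; ring
      rw [h2]
      ring
    rw [Finset.sum_congr rfl hterm, Finset.sum_add_distrib]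
    -- first sum: shift index
    have e1 : ∑ k ∈ range (n+2), ((n+1).choose k : R) *
        (∏ i ∈ range k, (x - i)) * (∏ i ∈ range (n+1-k), (y - i))
      = ∑ k ∈ range (n+1), ((n+1).choose (k+1) : R) *
        (∏ i ∈ range (k+1), (x - i)) * (∏ i ∈ range (n-k), (y - i))
        + (∏ i ∈ range (n+1), (y - i)) := by
      rw [Finset.sum_range_succ']
      simp
    rw [e1]
    have e2 : ∀ k, ((n+1).choose (k+1) : R) = (n.choose k : R) + (n.choose (k+1) : R) := by
      intro k; rw [Nat.choose_succ_succ]; push_cast; ring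
    have e3 : ∑ k ∈ range (n+1), ((n+1).choose (k+1) : R) *
        (∏ i ∈ range (k+1), (x - i)) * (∏ i ∈ range (n-k), (y - i))
      = ∑ k ∈ range (n+1), (n.choose k : R) *
        (∏ i ∈ range (k+1), (x - i)) * (∏ i ∈ range (n-k), (y - i))
        + ∑ k ∈ range (n+1), (n.choose (k+1) : R) *
        (∏ i ∈ range (k+1), (x - i)) * (∏ i ∈ range (n-k), (y - i)) := by
      rw [← Finset.sum_add_distrib]
      exact Finset.sum_congr rfl (fun k _ => by rw [e2]; ring)
    rw [e3]
    have e4 : ∑ k ∈ range (n+1), (n.choose (k+1) : R) *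
        (∏ i ∈ range (k+1), (x - i)) * (∏ i ∈ range (n-k), (y - i))
        + (∏ i ∈ range (n+1), (y - i))
      = ∑ k ∈ range (n+1), (n.choose k : R) *
        (∏ i ∈ range k, (x - i)) * (∏ i ∈ range (n+1-k), (y - i)) := by
      have : ∑ k ∈ range (n+2), (n.choose k : R) *
          (∏ i ∈ range k, (x - i)) * (∏ i ∈ range (n+1-k), (y - i))
        = ∑ k ∈ range (n+1), (n.choose (k+1) : R) *
          (∏ i ∈ range (k+1), (x - i)) * (∏ i ∈ range (n+1-(k+1)), (y - i))
          + (n.choose 0 : R) * (∏ i ∈ range 0, (x - i)) * (∏ i ∈ range (n+1-0), (y - i)) :=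
        Finset.sum_range_succ' _ _
      rw [Finset.sum_range_succ] at this
      simp only [Nat.choose_succ_self, Nat.cast_zero, zero_mul, add_zero, Nat.choose_zero_right,
        Nat.cast_one, one_mul, prod_range_zero] at this
      simp only [Nat.succ_sub_succ, Nat.sub_zero] at this
      exact this.symm
    rw [add_comm (∑ k ∈ range (n+1), (n.choose k : R) *
        (∏ i ∈ range (k+1), (x - i)) * (∏ i ∈ range (n-k), (y - i)))]
    rw [add_assoc, e4]
    ring

namespace Q
lemma sum_a {ι : Type*} (s : Finset ι) (f : ι → Q) : (∑ i ∈ s, f i).a = ∑ i ∈ s, (f i).a := by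
  induction s using Finset.cons_induction <;> simp [*]
lemma sum_b {ι : Type*} (s : Finset ι) (f : ι → Q) : (∑ i ∈ s, f i).b = ∑ i ∈ s, (f i).b := by
  induction s using Finset.cons_induction <;> simp [*]
lemma sum_d {ι : Type*} (s : Finset ι) (f : ι → Q) : (∑ i ∈ s, f i).d = ∑ i ∈ s, (f i).d := by
  induction s using Finset.cons_induction <;> simp [*]
end Q

theorem stmt_18 (n : ℕ) :
    ∑ k ∈ range (n + 1), (n.choose k : ℝ) ^ 2 * H k * H (n - k) =
      ((2 * n).choose n : ℝ) *
        ((H (2 * n) - 2 * H n) ^ 2 + H2 n - H2 (2 * n)) := by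
  set D : ℝ := dR (2*n) n with hDdef
  set h : ℝ := H (2*n) - H n with hhdef
  set h2 : ℝ := H2 (2*n) - H2 n with hh2def
  -- main Q identity
  have hxy : (⟨(n:ℝ),1,0,0⟩ : Q) + (⟨(n:ℝ),0,1,0⟩ : Q) = (⟨((2*n : ℕ):ℝ),1,1,0⟩ : Q) := by
    ext <;> simp <;> push_cast <;> ring
  have main := vdm (⟨(n:ℝ),1,0,0⟩ : Q) (⟨(n:ℝ),0,1,0⟩ : Q) n
  rw [hxy] at main
  have hZ := evalZ (2*n) n (by omega)
  have h2nn : 2*n - n = n := by omega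
  rw [h2nn] at hZ
  rw [hZ] at main
  -- rewrite summands
  have hterm : ∀ k ∈ range (n+1),
      ((n.choose k : ℕ) : Q) * (∏ i ∈ Finset.range k, ((⟨(n:ℝ),1,0,0⟩ : Q) - (i:Q)))
        * (∏ i ∈ Finset.range (n-k), ((⟨(n:ℝ),0,1,0⟩ : Q) - (i:Q)))
      = (⟨(n.choose k : ℝ) * (dR n k * dR n (n-k)),
          (n.choose k : ℝ) * (dR n k * dR n (n-k)) * (H n - H (n-k)),
          (n.choose k : ℝ) * (dR n k * dR n (n-k)) * (H n - H k),
          (n.choose k : ℝ) * (dR n k * dR n (n-k)) * ((H n - H (n-k)) * (H n - H k))⟩ : Q) := by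
    intro k hk
    rw [mem_range] at hk
    have hk' : k ≤ n := by omega
    have hnk : n - k ≤ n := by omega
    have hnnk : n - (n - k) = k := by omega
    rw [evalX n k hk', evalY n (n-k) hnk, hnnk]
    ext <;> simp <;> ring
  rw [Finset.sum_congr rfl hterm] at main
  -- extract components
  have EqA : D = ∑ k ∈ range (n+1), (n.choose k : ℝ) * (dR n k * dR n (n-k)) := by
    have := congrArg Q.a main
    simpa [Q.sum_a] using this
  have EqB : D * h = ∑ k ∈ range (n+1),
      (n.choose k : ℝ) * (dR n k * dR n (n-k)) * (H n - H (n-k)) := by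
    have := congrArg Q.b main
    simpa [Q.sum_b] using this
  have EqD : D * (h^2 - h2) = ∑ k ∈ range (n+1),
      (n.choose k : ℝ) * (dR n k * dR n (n-k)) * ((H n - H (n-k)) * (H n - H k)) := by
    have := congrArg Q.d main
    simpa [Q.sum_d] using this
  -- scalar facts
  have hfac : ∀ k, k ≤ n → (n.choose k : ℝ) * (dR n k * dR n (n-k))
      = ((n.factorial : ℕ) : ℝ) * (n.choose k : ℝ)^2 := by
    intro k hk
    have f1 : dR n k * (((n-k).factorial : ℕ) : ℝ) = ((n.factorial : ℕ) : ℝ) := dR_factorial hk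
    have hnnk : n - (n - k) = k := by omega
    have f2 : dR n (n-k) * ((k.factorial : ℕ) : ℝ) = ((n.factorial : ℕ) : ℝ) := by
      have := dR_factorial (show n - k ≤ n by omega)
      rwa [hnnk] at this
    have f3 : (n.choose k : ℝ) * (k.factorial : ℝ) * ((n-k).factorial : ℝ)
        = ((n.factorial : ℕ) : ℝ) := by
      rw [← Nat.cast_mul, ← Nat.cast_mul]
      exact_mod_cast congrArg (Nat.cast : ℕ → ℝ) (Nat.choose_mul_factorial_mul_factorial hk)
    have hne : ((k.factorial : ℕ) : ℝ) * (((n-k).factorial : ℕ) : ℝ) ≠ 0 := by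
      positivity
    have : ((n.choose k : ℝ) * (dR n k * dR n (n-k))) * ((k.factorial : ℝ) * ((n-k).factorial : ℝ))
        = (((n.factorial : ℕ) : ℝ) * (n.choose k : ℝ)^2) * ((k.factorial : ℝ) * ((n-k).factorial : ℝ)) := by
      calc ((n.choose k : ℝ) * (dR n k * dR n (n-k))) * ((k.factorial : ℝ) * ((n-k).factorial : ℝ))
          = (n.choose k : ℝ) * (dR n k * ((n-k).factorial : ℝ)) * (dR n (n-k) * (k.factorial : ℝ)) := by ring
        _ = (n.choose k : ℝ) * ((n.factorial : ℕ) : ℝ) * ((n.factorial : ℕ) : ℝ) := by rw [f1, f2]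
        _ = ((n.factorial : ℕ) : ℝ) * ((n.choose k : ℝ) * (k.factorial : ℝ) * ((n-k).factorial : ℝ)) * (n.choose k : ℝ) := by rw [f3]; ring
        _ = (((n.factorial : ℕ) : ℝ) * (n.choose k : ℝ)^2) * ((k.factorial : ℝ) * ((n-k).factorial : ℝ)) := by ring
    exact mul_right_cancel₀ hne this
  have hD : D = ((n.factorial : ℕ) : ℝ) * ((2*n).choose n : ℝ) := by
    have f1 : D * (((2*n-n).factorial : ℕ) : ℝ) = (((2*n).factorial : ℕ) : ℝ) :=
      dR_factorial (show n ≤ 2*n by omega)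
    rw [h2nn] at f1
    have f3 : ((2*n).choose n : ℝ) * (n.factorial : ℝ) * (((2*n-n).factorial : ℕ) : ℝ)
        = (((2*n).factorial : ℕ) : ℝ) := by
      rw [← Nat.cast_mul, ← Nat.cast_mul]
      exact_mod_cast congrArg (Nat.cast : ℕ → ℝ)
        (Nat.choose_mul_factorial_mul_factorial (show n ≤ 2*n by omega))
    rw [h2nn] at f3
    have hne : ((n.factorial : ℕ) : ℝ) ≠ 0 := by positivity
    apply mul_right_cancel₀ hne
    rw [f1, ← f3]
    ring
  have hNne : ((n.factorial : ℕ) : ℝ) ≠ 0 := by positivity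
  have conv1 : ∀ (f : ℕ → ℝ), ∑ k ∈ range (n+1), (n.choose k : ℝ) * (dR n k * dR n (n-k)) * f k
      = ((n.factorial : ℕ) : ℝ) * ∑ k ∈ range (n+1), (n.choose k : ℝ)^2 * f k := by
    intro f
    rw [Finset.mul_sum]
    exact Finset.sum_congr rfl (fun k hk => by
      rw [mem_range] at hk
      rw [hfac k (by omega)]; ring)
  have hA : ∑ k ∈ range (n+1), (n.choose k : ℝ)^2 = ((2*n).choose n : ℝ) := by
    apply mul_left_cancel₀ hNne
    rw [← hD]
    rw [EqA]
    have h1 := conv1 (fun _ => 1)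
    simp only [mul_one] at h1
    exact h1.symm
  have hB : ∑ k ∈ range (n+1), (n.choose k : ℝ)^2 * (H n - H (n-k))
      = ((2*n).choose n : ℝ) * h := by
    apply mul_left_cancel₀ hNne
    rw [← conv1 (fun k => H n - H (n-k)), ← EqB, hD]
    ring
  have hDD : ∑ k ∈ range (n+1), (n.choose k : ℝ)^2 * ((H n - H (n-k)) * (H n - H k))
      = ((2*n).choose n : ℝ) * (h^2 - h2) := by
    apply mul_left_cancel₀ hNne
    rw [← conv1 (fun k => (H n - H (n-k)) * (H n - H k)), ← EqD, hD]
    ring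
  -- symmetry
  have hsym : ∑ k ∈ range (n+1), (n.choose k : ℝ)^2 * H (n-k)
      = ∑ k ∈ range (n+1), (n.choose k : ℝ)^2 * H k := by
    have hrefl := Finset.sum_range_reflect (fun j => (n.choose j : ℝ)^2 * H (n - j)) (n+1)
    simp only [Nat.add_sub_cancel] at hrefl
    rw [← hrefl]
    exact Finset.sum_congr rfl (fun k hk => by
      rw [mem_range] at hk
      have e1 : n - (n - k) = k := by omega
      have e2 : n.choose (n - k) = n.choose k := Nat.choose_symm (by omega)
      rw [e1, e2])
  have hBn : ∑ k ∈ range (n+1), (n.choose k : ℝ)^2 * H (n-k)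
      = ((2*n).choose n : ℝ) * H n - ((2*n).choose n : ℝ) * h := by
    have hsplit : ∑ k ∈ range (n+1), (n.choose k : ℝ)^2 * (H n - H (n-k))
        = H n * (∑ k ∈ range (n+1), (n.choose k : ℝ)^2)
          - ∑ k ∈ range (n+1), (n.choose k : ℝ)^2 * H (n-k) := by
      rw [Finset.mul_sum, ← Finset.sum_sub_distrib]
      exact Finset.sum_congr rfl (fun k _ => by ring)
    rw [hsplit, hA] at hB
    linarith
  -- final expansion
  have expand : ∀ k ∈ range (n+1), (n.choose k : ℝ)^2 * H k * H (n-k)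
      = (n.choose k : ℝ)^2 * ((H n - H (n-k)) * (H n - H k))
        - (H n)^2 * (n.choose k : ℝ)^2
        + H n * ((n.choose k : ℝ)^2 * H (n-k))
        + H n * ((n.choose k : ℝ)^2 * H k) := by
    intro k _
    ring
  rw [Finset.sum_congr rfl expand]
  rw [Finset.sum_add_distrib, Finset.sum_add_distrib, Finset.sum_sub_distrib, hDD,
    ← Finset.mul_sum, ← Finset.mul_sum, ← Finset.mul_sum, hA, hBn, ← hsym, hBn]
  rw [hhdef, hh2def]
  ring
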